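/- Fix q ∈ (0,1) and let g(x) = x·(1 − δ·(1−x)·(x−q)). If δ > 3/(1 − q + q²), then g has negative Schwarzian derivative on [0,1]; equivalently, 2·g'(x)·g'''(x) − 3·(g''(x))² < 0 for every x ∈ [0,1]. -/

import Mathlib

lemma cubic_hasDerivAt (a b c d x : ℝ) :
    HasDerivAt (fun x : ℝ => a*x^3 + b*x^2 + c*x + d) (3*a*x^2 + 2*b*x + c) x := by
  have h := (((hasDerivAt_pow 3 x).const_mul a).add ((hasDerivAt_pow 2 x).const_mul b)).add
    (((hasDerivAt_id x).const_mul c).add (hasDerivAt_const x d))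
  refine (h.congr_deriv ?_).congr_of_eventuallyEq (Filter.Eventually.of_forall fun y => ?_)
  · simp; ring
  · simp only [id, Pi.add_apply]; ring

/-- Fix `q ∈ (0,1)` and let `g x = x * (1 − δ*(1−x)*(x−q))`.
If `δ > 3/(1 − q + q²)`, then `g` has negative Schwarzian derivative on `[0,1]`:
`2 g'(x) g'''(x) − 3 (g''(x))² < 0` for every `x ∈ [0,1]`. -/
theorem ppi_negative_schwarzian (q δ : ℝ) (hq : q ∈ Set.Ioo (0:ℝ) 1)
    (hδ : 3 / (1 - q + q ^ 2) < δ)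
    (g : ℝ → ℝ)
    (hg : ∀ x : ℝ, g x = x * (1 - δ * (1 - x) * (x - q))) :
    ∀ x ∈ Set.Icc (0:ℝ) 1,
      2 * deriv g x * iteratedDeriv 3 g x - 3 * (iteratedDeriv 2 g x) ^ 2 < 0 := by
  have hgf : g = fun x : ℝ => δ*x^3 + (-(δ*(1+q)))*x^2 + (1+δ*q)*x + 0 := by
    funext x; rw [hg x]; ring
  have hd1 : deriv g = fun x : ℝ => 3*δ*x^2 + 2*(-(δ*(1+q)))*x + (1+δ*q) := by
    funext x; rw [hgf]; exact (cubic_hasDerivAt _ _ _ _ x).deriv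
  have hd1' : deriv g = fun x : ℝ => 0*x^3 + (3*δ)*x^2 + (2*(-(δ*(1+q))))*x + (1+δ*q) := by
    rw [hd1]; funext x; ring
  have hd2 : deriv (deriv g) = fun x : ℝ => 6*δ*x + 2*(-(δ*(1+q))) := by
    funext x; rw [hd1']
    have := (cubic_hasDerivAt 0 (3*δ) (2*(-(δ*(1+q)))) (1+δ*q) x).deriv
    rw [this]; ring
  have hd2' : deriv (deriv g) = fun x : ℝ => 0*x^3 + 0*x^2 + (6*δ)*x + 2*(-(δ*(1+q))) := by
    rw [hd2]; funext x; ring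
  have hd3 : deriv (deriv (deriv g)) = fun x : ℝ => 6*δ := by
    funext x; rw [hd2']
    have := (cubic_hasDerivAt 0 0 (6*δ) (2*(-(δ*(1+q)))) x).deriv
    rw [this]; ring
  have hi2 : iteratedDeriv 2 g = deriv (deriv g) := by
    rw [show (2:ℕ) = 1+1 from rfl, iteratedDeriv_succ, iteratedDeriv_one]
  have hi3 : iteratedDeriv 3 g = deriv (deriv (deriv g)) := by
    rw [show (3:ℕ) = 2+1 from rfl, iteratedDeriv_succ, hi2]
  intro x hx
  rw [hi3, hd3, hi2, hd2, hd1]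
  simp only []
  obtain ⟨hq0, hq1⟩ := hq
  have hpos : (0:ℝ) < 1 - q + q^2 := by nlinarith
  have hδpos : 0 < δ := lt_trans (div_pos (by norm_num) hpos) hδ
  have key : 3 < δ * (1 - q + q^2) := by
    rw [div_lt_iff₀ hpos] at hδ; linarith
  nlinarith [mul_nonneg (mul_nonneg hδpos.le hδpos.le) (sq_nonneg (3*x - 1 - q)),
    mul_pos hδpos (show (0:ℝ) < δ*(1-q+q^2) - 3 by linarith)]
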